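/- Let c be a positive integer and let t ∈ ℂ with e^{ct} ≠ 1. Then, summing over all c-th roots of unity ξ in ℂ other than 1, ∑_{ξ^c = 1, ξ ≠ 1} ξ e^t / (1 − ξ e^t) = e^t/(e^t − 1) − c·e^{ct}/(e^{ct} − 1). (The finite roots-of-unity identity established in Section 6 in the evaluation of p-adic L-values; note e^{ct} ≠ 1 guarantees that all denominators 1 − ξe^t and e^t − 1 are nonzero.) -/

import Mathlib

open Complex Finset Polynomial

lemma nthRootsFinset_eq_image (n : ℕ) (hn : 0 < n) {ζ : ℂ} (hζ : IsPrimitiveRoot ζ n) :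
    Polynomial.nthRootsFinset n (1 : ℂ) = (Finset.range n).image (ζ ^ ·) := by
  haveI : NeZero n := ⟨hn.ne'⟩
  ext x
  simp only [Polynomial.mem_nthRootsFinset hn (1 : ℂ), Finset.mem_image, Finset.mem_range]
  constructor
  · intro hx
    obtain ⟨i, hi, rfl⟩ := hζ.eq_pow_of_pow_eq_one hx
    exact ⟨i, hi, rfl⟩
  · rintro ⟨i, hi, rfl⟩
    rw [← pow_mul, mul_comm, pow_mul, hζ.pow_eq_one, one_pow]

lemma sum_pow_nthRootsFinset (n : ℕ) (hn : 0 < n) (k : ℕ) :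
    ∑ ξ ∈ Polynomial.nthRootsFinset n (1 : ℂ), ξ ^ k
      = if n ∣ k then (n : ℂ) else 0 := by
  obtain ⟨ζ, hζ⟩ : ∃ ζ : ℂ, IsPrimitiveRoot ζ n :=
    ⟨_, Complex.isPrimitiveRoot_exp n hn.ne'⟩
  rw [nthRootsFinset_eq_image n hn hζ,
    Finset.sum_image (fun i hi j hj h =>
      hζ.injOn_pow (by simpa using hi) (by simpa using hj) h)]
  have h1 : ∀ i : ℕ, (ζ ^ i) ^ k = (ζ ^ k) ^ i := fun i => by
    rw [← pow_mul, mul_comm, pow_mul]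
  simp_rw [h1]
  by_cases hdvd : n ∣ k
  · rw [if_pos hdvd]
    have : ζ ^ k = 1 := by
      obtain ⟨m, rfl⟩ := hdvd
      rw [pow_mul, hζ.pow_eq_one, one_pow]
    simp [this]
  · rw [if_neg hdvd]
    have hne : ζ ^ k ≠ 1 := fun h => hdvd (hζ.dvd_of_pow_eq_one k h)
    have hpow : (ζ ^ k) ^ n = 1 := by
      rw [← pow_mul, mul_comm, pow_mul, hζ.pow_eq_one, one_pow]
    have := geom_sum_mul (ζ ^ k) n
    rw [hpow, sub_self] at this
    exact (mul_eq_zero.mp this).resolve_right (sub_ne_zero.mpr hne)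

/-- The roots-of-unity identity from Section 6: for `c ≥ 1` and `t ∈ ℂ` with
`e^{ct} ≠ 1`, summing over the `c`-th roots of unity `ξ ≠ 1`,
`∑_{ξ^c = 1, ξ ≠ 1} ξ e^t / (1 - ξ e^t) = e^t/(e^t - 1) - c e^{ct}/(e^{ct} - 1)`. -/
theorem sum_rootsOfUnity_exp (c : ℕ) (hc : 0 < c) (t : ℂ)
    (ht : Complex.exp ((c : ℂ) * t) ≠ 1) :
    ∑ ξ ∈ (Polynomial.nthRootsFinset c (1 : ℂ)).erase 1,
        ξ * Complex.exp t / (1 - ξ * Complex.exp t)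
      = Complex.exp t / (Complex.exp t - 1)
        - (c : ℂ) * Complex.exp ((c : ℂ) * t) / (Complex.exp ((c : ℂ) * t) - 1) := by
  set z : ℂ := Complex.exp t with hz
  have hzc : Complex.exp ((c : ℂ) * t) = z ^ c := by
    rw [hz, ← Complex.exp_nat_mul]
  rw [hzc] at ht ⊢
  have hz1 : z ≠ 1 := fun h => ht (by rw [h, one_pow])
  have hzc1 : z ^ c - 1 ≠ 0 := sub_ne_zero.mpr ht
  have hzc1' : (1 : ℂ) - z ^ c ≠ 0 := by
    intro h
    rw [sub_eq_zero] at h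
    exact ht h.symm
  -- per-term rewrite
  have hterm : ∀ ξ ∈ (Polynomial.nthRootsFinset c (1 : ℂ)).erase 1,
      ξ * z / (1 - ξ * z) = (∑ j ∈ Finset.range c, (ξ * z) ^ (j + 1)) / (1 - z ^ c) := by
    intro ξ hξ
    have hξc : ξ ^ c = 1 := (Polynomial.mem_nthRootsFinset hc (1 : ℂ)).mp (Finset.mem_of_mem_erase hξ)
    have hξzc : (ξ * z) ^ c = z ^ c := by rw [mul_pow, hξc, one_mul]
    have hne : (1 : ℂ) - ξ * z ≠ 0 := by
      intro h
      rw [sub_eq_zero] at h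
      have : ξ * z = 1 := h.symm
      apply ht
      calc z ^ c = (ξ * z) ^ c := hξzc.symm
        _ = 1 := by rw [this, one_pow]
    rw [div_eq_div_iff hne hzc1']
    have hgeom := geom_sum_mul (ξ * z) c
    have hs : ∑ j ∈ Finset.range c, (ξ * z) ^ (j + 1)
        = (ξ * z) * ∑ j ∈ Finset.range c, (ξ * z) ^ j := by
      rw [Finset.mul_sum]
      exact Finset.sum_congr rfl fun j _ => by ring
    rw [hs]
    linear_combination (ξ * z) * hgeom + (ξ * z) * hξzc
  rw [Finset.sum_congr rfl hterm, ← Finset.sum_div]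
  -- swap sums
  have h1mem : (1 : ℂ) ∈ Polynomial.nthRootsFinset c (1 : ℂ) := Polynomial.one_mem_nthRootsFinset hc
  have hswap : ∑ ξ ∈ (Polynomial.nthRootsFinset c (1 : ℂ)).erase 1,
      ∑ j ∈ Finset.range c, (ξ * z) ^ (j + 1)
      = ∑ j ∈ Finset.range c,
          ((if c ∣ (j + 1) then (c : ℂ) else 0) * z ^ (j + 1) - z ^ (j + 1)) := by
    rw [Finset.sum_comm]
    refine Finset.sum_congr rfl fun j _ => ?_
    have : ∑ ξ ∈ (Polynomial.nthRootsFinset c (1 : ℂ)).erase 1, (ξ * z) ^ (j + 1)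
        = (∑ ξ ∈ Polynomial.nthRootsFinset c (1 : ℂ), (ξ * z) ^ (j + 1)) - (1 * z) ^ (j + 1) :=
      Finset.sum_erase_eq_sub h1mem
    rw [this, one_mul]
    congr 1
    simp_rw [mul_pow, ← Finset.sum_mul]
    rw [sum_pow_nthRootsFinset c hc (j + 1)]
  rw [hswap, Finset.sum_sub_distrib]
  have hfirst : ∑ j ∈ Finset.range c,
      (if c ∣ (j + 1) then (c : ℂ) else 0) * z ^ (j + 1) = (c : ℂ) * z ^ c := by
    rw [Finset.sum_eq_single (c - 1)]
    · have hcc : c - 1 + 1 = c := by omega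
      rw [hcc, if_pos dvd_rfl]
    · intro j hj hjne
      have hj' := Finset.mem_range.mp hj
      rw [if_neg, zero_mul]
      intro hdvd
      have : j + 1 = c := Nat.eq_of_dvd_of_lt_two_mul (by omega) hdvd (by omega)
      omega
    · intro h
      exact absurd (Finset.mem_range.mpr (by omega)) h
  have hsecond : ∑ j ∈ Finset.range c, z ^ (j + 1) = z * ∑ j ∈ Finset.range c, z ^ j := by
    rw [Finset.mul_sum]
    exact Finset.sum_congr rfl fun j _ => by ring
  rw [hfirst, hsecond]
  have hgeom := geom_sum_mul z c
  have hz1' : z - 1 ≠ 0 := sub_ne_zero.mpr hz1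
  rw [div_sub_div _ _ hz1' hzc1, div_eq_div_iff hzc1' (mul_ne_zero hz1' hzc1)]
  linear_combination (-(z) * (z ^ c - 1)) * hgeom
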